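/- Theorem 3.1 (the Braun–Douglas number at representation level 1): for every integer n ≥ 2, D(n) = 2 if n + 2 is a power of 2, and D(n) = 1 otherwise. -/

import Mathlib

/-- The dimensions of the level-1 irreducible representations of `Sp(n)`:
`d_i = C(2n, i) - C(2n, i-2)`, with `C(2n, j) = 0` for `j < 0`. -/
def dRep (n i : ℕ) : ℤ :=
  ((2*n).choose i : ℤ) - if 2 ≤ i then ((2*n).choose (i-2) : ℤ) else 0

/-- The Braun–Douglas number `D(n)`: the gcd of the differences of the dimensions of the
two sides of the fusion relations `v_i·x = v_{i+1} + v_{i-1}` (for `1 ≤ i ≤ n-1`) and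
`v_n·x = v_{n-1}`. -/
def braunDouglas (n : ℕ) : ℕ :=
  Nat.gcd ((2*(n:ℤ) * dRep n n - dRep n (n-1)).natAbs)
    (Finset.gcd (Finset.Icc 1 (n-1))
      (fun i => (2*(n:ℤ) * dRep n i - dRep n (i+1) - dRep n (i-1)).natAbs))


/-- Lucas digit step: if `p ∣ a` and `p ∣ b` then `C(a,b) ≡ C(a/p, b/p) [MOD p]`. -/
lemma lucas_digit {p a b : ℕ} (hp : p.Prime) (ha : p ∣ a) (hb : p ∣ b) :
    Nat.choose a b ≡ Nat.choose (a / p) (b / p) [MOD p] := by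
  haveI : Fact p.Prime := ⟨hp⟩
  have h := Choose.choose_modEq_choose_mod_mul_choose_div_nat (n := a) (k := b) (p := p)
  have ha' : a % p = 0 := Nat.mod_eq_zero_of_dvd ha
  have hb' : b % p = 0 := Nat.mod_eq_zero_of_dvd hb
  simpa [ha', hb'] using h

/-- Lucas vanishing: if `p ∣ a` and `¬ p ∣ b` then `p ∣ C(a,b)`. -/
lemma lucas_zero {p a b : ℕ} (hp : p.Prime) (ha : p ∣ a) (hb : ¬ p ∣ b) :
    p ∣ Nat.choose a b := by
  haveI : Fact p.Prime := ⟨hp⟩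
  have h := Choose.choose_modEq_choose_mod_mul_choose_div_nat (n := a) (k := b) (p := p)
  have ha' : a % p = 0 := Nat.mod_eq_zero_of_dvd ha
  have hb' : 0 < b % p := by
    rcases Nat.eq_zero_or_pos (b % p) with h0 | h0
    · exact absurd (Nat.dvd_of_mod_eq_zero h0) hb
    · exact h0
  rw [ha', Nat.choose_eq_zero_of_lt hb', zero_mul] at h
  exact Nat.modEq_zero_iff_dvd.mp h

/-- `C(a, 2^s) ≡ a / 2^s [MOD 2]` (the `s`-th binary digit of `a`). -/
lemma choose_two_pow_mod_two (s : ℕ) : ∀ a : ℕ, Nat.choose a (2 ^ s) ≡ a / 2 ^ s [MOD 2] := by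
  induction s with
  | zero => intro a; simp [Nat.ModEq]
  | succ s ih =>
    intro a
    haveI : Fact (Nat.Prime 2) := ⟨Nat.prime_two⟩
    have h := Choose.choose_modEq_choose_mod_mul_choose_div_nat (n := a) (k := 2 ^ (s+1)) (p := 2)
    have h1 : 2 ^ (s+1) % 2 = 0 := by
      simp [pow_succ, Nat.mul_mod_left]
    have h2 : 2 ^ (s+1) / 2 = 2 ^ s := by
      rw [pow_succ, Nat.mul_div_cancel]; norm_num
    rw [h1, h2, Nat.choose_zero_right, one_mul] at h
    refine h.trans ((ih (a / 2)).trans ?_)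
    rw [Nat.div_div_eq_div_mul, ← pow_succ']

/-- `C(2^m - 1, b)` is odd for `b ≤ 2^m - 1`. -/
lemma choose_two_pow_sub_one_odd : ∀ m b : ℕ, b ≤ 2 ^ m - 1 →
    Nat.choose (2 ^ m - 1) b ≡ 1 [MOD 2] := by
  intro m
  induction m with
  | zero => intro b hb; interval_cases b; simp [Nat.ModEq]
  | succ m ih =>
    intro b hb
    haveI : Fact (Nat.Prime 2) := ⟨Nat.prime_two⟩
    have hpow : 1 ≤ 2 ^ m := Nat.one_le_two_pow
    have h := Choose.choose_modEq_choose_mod_mul_choose_div_nat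
      (n := 2 ^ (m+1) - 1) (k := b) (p := 2)
    have e1 : (2 ^ (m+1) - 1) % 2 = 1 := by
      have : 2 ^ (m+1) = 2 * 2 ^ m := by rw [pow_succ']
      omega
    have e2 : (2 ^ (m+1) - 1) / 2 = 2 ^ m - 1 := by
      have : 2 ^ (m+1) = 2 * 2 ^ m := by rw [pow_succ']
      omega
    have e3 : Nat.choose 1 (b % 2) = 1 := by
      have : b % 2 = 0 ∨ b % 2 = 1 := by omega
      rcases this with h' | h' <;> simp [h']
    rw [e1, e2, e3, one_mul] at h
    refine h.trans (ih (b / 2) ?_)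
    have : 2 ^ (m+1) = 2 * 2 ^ m := by rw [pow_succ']
    omega



/-- the `i`-th fusion-difference. -/
def FF (n i : ℕ) : ℤ := 2*(n:ℤ) * dRep n i - dRep n (i+1) - dRep n (i-1)

lemma dRep_of_two_le {n i : ℕ} (h : 2 ≤ i) :
    dRep n i = ((2*n).choose i : ℤ) - ((2*n).choose (i-2) : ℤ) := by
  simp [dRep, h]

lemma dRep_of_lt {n i : ℕ} (h : i < 2) : dRep n i = ((2*n).choose i : ℤ) := by
  simp [dRep, Nat.not_le.mpr h]

lemma dRep_succ_top {n : ℕ} (hn : 1 ≤ n) : dRep n (n+1) = 0 := by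
  rw [dRep_of_two_le (by omega)]
  have h1 : n + 1 - 2 = n - 1 := by omega
  have h2 : 2*n - (n+1) = n - 1 := by omega
  have := Nat.choose_symm (n := 2*n) (k := n+1) (by omega)
  rw [h1, ← h2, this]
  ring

/-- `braunDouglas` divides every `|FF n i|`, `1 ≤ i ≤ n`. -/
lemma braunDouglas_dvd {n i : ℕ} (hn : 1 ≤ n) (h1 : 1 ≤ i) (h2 : i ≤ n) :
    braunDouglas n ∣ (FF n i).natAbs := by
  rcases eq_or_lt_of_le h2 with rfl | hlt
  · have : FF i i = 2*(i:ℤ) * dRep i i - dRep i (i-1) := by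
      rw [FF, dRep_succ_top h1]; ring
    rw [this]
    exact Nat.gcd_dvd_left _ _
  · refine dvd_trans (Nat.gcd_dvd_right _ _) (Finset.gcd_dvd ?_)
    simp only [Finset.mem_Icc]
    omega

/-- anything dividing every `|FF n i|` divides `braunDouglas`. -/
lemma dvd_braunDouglas {n c : ℕ} (hn : 1 ≤ n)
    (h : ∀ i, 1 ≤ i → i ≤ n → c ∣ (FF n i).natAbs) :
    c ∣ braunDouglas n := by
  refine Nat.dvd_gcd ?_ (Finset.dvd_gcd ?_)
  · have := h n hn le_rfl
    rw [FF, dRep_succ_top hn] at this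
    simpa using this
  · intro i hi
    simp only [Finset.mem_Icc] at hi
    exact h i hi.1 (by omega)

lemma choose_two_mul_two (n : ℕ) : (2*n).choose 2 = n * (2*n - 1) := by
  rw [Nat.choose_two_right, show 2*n*(2*n-1) = (n*(2*n-1))*2 by ring]
  exact Nat.mul_div_cancel _ (by norm_num)

lemma FF_one (n : ℕ) (hn : 1 ≤ n) : FF n 1 = (n:ℤ) * (2*n+1) := by
  rw [FF, dRep_of_lt (by norm_num), dRep_of_two_le (by norm_num), dRep_of_lt (by norm_num)]
  norm_num [Nat.choose_one_right, choose_two_mul_two]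
  push_cast [Nat.cast_sub (by omega : 1 ≤ 2*n)]
  ring

lemma FF_one_natAbs (n : ℕ) (hn : 1 ≤ n) : (FF n 1).natAbs = n * (2*n+1) := by
  rw [FF_one n hn, show (n:ℤ) * (2*n+1) = ((n*(2*n+1) : ℕ) : ℤ) by push_cast; ring]
  exact Int.natAbs_natCast _

/-- `FF` in pure-binomial form. -/
lemma FF_choose (n : ℕ) : ∀ i, 1 ≤ i →
    FF n i = 2*(n:ℤ) * dRep n i -
      (((2*n).choose (i+1) : ℤ) - if 3 ≤ i then ((2*n).choose (i-3) : ℤ) else 0)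
  | 1, _ => by
    rw [FF, dRep_of_two_le (by norm_num : (2:ℕ) ≤ 2), dRep_of_lt (by norm_num : (0:ℕ) < 2)]
    norm_num; ring
  | 2, _ => by
    rw [FF, dRep_of_two_le (by norm_num : (2:ℕ) ≤ 3), dRep_of_lt (by norm_num : (1:ℕ) < 2)]
    norm_num [Nat.choose_one_right]; ring
  | (j+3), _ => by
    rw [FF, dRep_of_two_le (by omega : 2 ≤ j+3+1), dRep_of_two_le (by omega : 2 ≤ j+3-1),
      if_pos (by omega : 3 ≤ j+3)]
    rw [show j+3+1-2 = j+3-1 by omega, show j+3-1-2 = j+3-3 by omega]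
    ring


lemma pascal_int (n k : ℕ) : ((2*n+1).choose (k+1) : ℤ) = ((2*n).choose k : ℤ) + ((2*n).choose (k+1) : ℤ) := by
  exact_mod_cast congrArg (Nat.cast (R := ℤ)) (Nat.choose_succ_succ (2*n) k)

lemma sum3_two (n : ℕ) : dRep n 1 + dRep n 2 + dRep n 3 = ((2*n+1).choose 3 : ℤ) - 1 := by
  rw [dRep_of_lt (by norm_num), dRep_of_two_le (by norm_num : (2:ℕ) ≤ 2),
    dRep_of_two_le (by norm_num : (2:ℕ) ≤ 3),
    show ((3:ℕ)) = 2 + 1 by norm_num, pascal_int n 2]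
  norm_num
  ring

lemma sum3_five (n : ℕ) : dRep n 4 + dRep n 5 + dRep n 6
    = ((2*n+1).choose 6 : ℤ) - ((2*n+1).choose 3 : ℤ) := by
  rw [dRep_of_two_le (by norm_num : (2:ℕ) ≤ 4), dRep_of_two_le (by norm_num : (2:ℕ) ≤ 5),
    dRep_of_two_le (by norm_num : (2:ℕ) ≤ 6),
    show ((6:ℕ)) = 5 + 1 by norm_num, pascal_int n 5,
    show ((3:ℕ)) = 2 + 1 by norm_num, pascal_int n 2]
  norm_num
  ring

lemma no_odd_prime {n q : ℕ} (hn : 2 ≤ n) (hn4 : n ≠ 4) (hq : q.Prime) (hq2 : q ≠ 2)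
    (hdvd : q ∣ braunDouglas n) : False := by
  have hq3 : 3 ≤ q := by
    rcases hq.two_le.lt_or_eq with h | h
    · omega
    · omega
  have hFF : ∀ i, 1 ≤ i → i ≤ n → (q:ℤ) ∣ FF n i := fun i h1 h2 =>
    Int.natCast_dvd.mpr (hdvd.trans (braunDouglas_dvd (by omega) h1 h2))
  have hd1 : q ∣ n * (2*n+1) := by
    have := hdvd.trans (braunDouglas_dvd (n := n) (i := 1) (by omega) le_rfl (by omega))
    rwa [FF_one_natAbs n (by omega)] at this
  rcases (Nat.Prime.dvd_mul hq).mp hd1 with hqn | hq2n1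
  · -- q ∣ n
    have h3n : 3 ≤ n := le_trans hq3 (Nat.le_of_dvd (by omega) hqn)
    have hF3 : (q:ℤ) ∣ FF n 3 := hFF 3 (by omega) h3n
    rw [FF_choose n 3 (by omega)] at hF3
    have hqnz : (q:ℤ) ∣ 2*(n:ℤ) * dRep n 3 := by
      have : (q:ℤ) ∣ (n:ℤ) := Int.natCast_dvd_natCast.mpr hqn
      exact Dvd.dvd.mul_right (this.mul_left 2) _
    have hC : (q:ℤ) ∣ ((2*n).choose 4 : ℤ) - 1 := by
      have := dvd_sub hqnz hF3
      simpa using this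
    have h1 : (1 : ℕ) ≡ (2*n).choose 4 [MOD q] := by
      rw [Nat.modEq_iff_dvd]
      simpa using hC
    have h0 : (2*n).choose 4 ≡ 0 [MOD q] := by
      refine Nat.modEq_zero_iff_dvd.mpr (lucas_zero hq (hqn.mul_left 2) ?_)
      intro hq4
      have hq4' : q ∣ 2^2 := by norm_num; exact hq4
      have : q ∣ 2 := hq.dvd_of_dvd_pow hq4'
      have := Nat.le_of_dvd (by norm_num) this
      omega
    have : q ∣ 1 := Nat.modEq_zero_iff_dvd.mp (h1.trans h0)
    simp at this; omega
  · -- q ∣ 2n+1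
    have hq2n1' : (q:ℤ) ∣ (2*(n:ℤ)+1) := by
      have : (q:ℤ) ∣ ((2*n+1 : ℕ) : ℤ) := Int.natCast_dvd_natCast.mpr hq2n1
      push_cast at this; exact this
    have key : ∀ i, 1 ≤ i → i ≤ n →
        (q:ℤ) ∣ dRep n (i-1) + dRep n i + dRep n (i+1) := by
      intro i h1 h2
      have hA : (q:ℤ) ∣ (2*(n:ℤ)+1) * dRep n i := hq2n1'.mul_right _
      have hB := hFF i h1 h2
      have := dvd_sub hA hB
      rw [FF] at this
      convert this using 1
      exacts [rfl, by ring]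
    have k2 := key 2 (by omega) hn
    rw [show (2:ℕ) - 1 = 1 by norm_num, sum3_two] at k2
    have h31 : (1 : ℕ) ≡ (2*n+1).choose 3 [MOD q] := by
      rw [Nat.modEq_iff_dvd]; simpa using k2
    by_cases hq3' : q = 3
    · subst hq3'
      have h3dvd : (3:ℕ) ∣ 2*n+1 := hq2n1
      have hn5 : 5 ≤ n := by omega
      have k5 := key 5 (by omega) hn5
      rw [show (5:ℕ) - 1 = 4 by norm_num, sum3_five] at k5
      have h36 : (2*n+1).choose 3 ≡ (2*n+1).choose 6 [MOD 3] := by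
        rw [Nat.modEq_iff_dvd]; simpa using k5
      have h61 : (1 : ℕ) ≡ (2*n+1).choose 6 [MOD 3] := h31.trans h36
      set m' := (2*n+1)/3 with hm'
      have hdig3 : (2*n+1).choose 3 ≡ m' [MOD 3] := by
        have := lucas_digit Nat.prime_three h3dvd (by norm_num : (3:ℕ) ∣ 3)
        simpa using this
      have hm1 : m' % 3 = 1 := by
        have := (h31.trans hdig3)
        simpa [Nat.ModEq] using this.symm
      have hdig6 : (2*n+1).choose 6 ≡ Nat.choose m' 2 [MOD 3] := by
        have := lucas_digit Nat.prime_three h3dvd (by norm_num : (3:ℕ) ∣ 6)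
        simpa using this
      have hsplit : Nat.choose m' 2 ≡ 0 [MOD 3] := by
        haveI : Fact (Nat.Prime 3) := ⟨Nat.prime_three⟩
        have h := Choose.choose_modEq_choose_mod_mul_choose_div_nat (n := m') (k := 2) (p := 3)
        rw [hm1] at h
        simpa using h
      have : (3:ℕ) ∣ 1 := Nat.modEq_zero_iff_dvd.mp ((h61.trans hdig6).trans hsplit)
      simp at this
    · have h0 : (2*n+1).choose 3 ≡ 0 [MOD q] := by
        refine Nat.modEq_zero_iff_dvd.mpr (lucas_zero hq hq2n1 ?_)
        intro h3
        have := (Nat.prime_dvd_prime_iff_eq hq Nat.prime_three).mp h3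
        omega
      have : q ∣ 1 := Nat.modEq_zero_iff_dvd.mp (h31.trans h0)
      simp at this; omega


/-- parity of `C(2n, j)` when `n + 2 = 2^k`. -/
lemma parity_choose {n k : ℕ} (hk : 2 ≤ k) (hnk : n + 2 = 2^k) :
    ∀ j, j ≤ n + 1 → Nat.choose (2*n) j ≡ (if 4 ∣ j then 1 else 0) [MOD 2] := by
  intro j hj
  have hpow : 4 ≤ 2^k := by
    calc (4:ℕ) = 2^2 := by norm_num
    _ ≤ 2^k := Nat.pow_le_pow_right (by norm_num) hk
  have hkk : 2^k = 2*2^(k-1) := by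
    rw [← pow_succ']; congr 1; omega
  have hk1 : 2 ≤ 2^(k-1) := by omega
  have hneq : n = 2^k - 2 := by omega
  have hn2 : 2 ∣ n := by omega
  by_cases h2j : 2 ∣ j
  · obtain ⟨j', rfl⟩ := h2j
    have step1 : Nat.choose (2*n) (2*j') ≡ Nat.choose n j' [MOD 2] := by
      have := lucas_digit Nat.prime_two (Dvd.intro n rfl) (Dvd.intro j' rfl)
      simpa [Nat.mul_div_cancel_left _ (by norm_num : 0 < 2)] using this
    by_cases h2j' : 2 ∣ j'
    · obtain ⟨j'', rfl⟩ := h2j'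
      have step2 : Nat.choose n (2*j'') ≡ Nat.choose (n/2) j'' [MOD 2] := by
        have := lucas_digit Nat.prime_two hn2 (Dvd.intro j'' rfl)
        simpa [Nat.mul_div_cancel_left _ (by norm_num : 0 < 2)] using this
      have hnd : n / 2 = 2^(k-1) - 1 := by omega
      have step3 : Nat.choose (n/2) j'' ≡ 1 [MOD 2] := by
        rw [hnd]
        exact choose_two_pow_sub_one_odd (k-1) j'' (by omega)
      rw [if_pos (by omega : 4 ∣ 2*(2*j''))]
      exact (step1.trans step2).trans step3
    · rw [if_neg (by omega : ¬ 4 ∣ 2*j')]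
      exact step1.trans (Nat.modEq_zero_iff_dvd.mpr (lucas_zero Nat.prime_two hn2 h2j'))
  · rw [if_neg (by omega : ¬ 4 ∣ j)]
    exact Nat.modEq_zero_iff_dvd.mpr (lucas_zero Nat.prime_two (Dvd.intro n rfl) h2j)


/-- If `n+2` is a power of two then every fusion difference is even. -/
lemma two_dvd_bd {n k : ℕ} (hn : 2 ≤ n) (hk : n + 2 = 2^k) : 2 ∣ braunDouglas n := by
  have hpow4 : 4 ≤ 2^k := by omega
  have hk2 : 2 ≤ k := by
    by_contra h
    interval_cases k <;> omega
  refine dvd_braunDouglas (by omega) ?_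
  intro i h1 h2
  rw [← Int.natCast_dvd]
  push_cast
  rw [FF_choose n i h1]
  have hd : (2:ℤ) ∣ 2*(n:ℤ) * dRep n i := ⟨(n:ℤ) * dRep n i, by ring⟩
  refine dvd_sub hd ?_
  by_cases h3 : 3 ≤ i
  · rw [if_pos h3]
    have e1 := parity_choose hk2 hk (i+1) (by omega)
    have e2 := parity_choose hk2 hk (i-3) (by omega)
    have hiff : (4 ∣ i+1) ↔ (4 ∣ i-3) := by omega
    have hmeq : Nat.choose (2*n) (i+1) ≡ Nat.choose (2*n) (i-3) [MOD 2] := by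
      by_cases hii : 4 ∣ i+1
      · rw [if_pos hii] at e1
        rw [if_pos (hiff.mp hii)] at e2
        exact e1.trans e2.symm
      · rw [if_neg hii] at e1
        rw [if_neg (fun h => hii (hiff.mpr h))] at e2
        exact e1.trans e2.symm
    have hz := (Nat.modEq_iff_dvd).mp hmeq
    have hz' : (2:ℤ) ∣ ((2*n).choose (i-3) : ℤ) - ((2*n).choose (i+1) : ℤ) := by
      exact_mod_cast hz
    have hz'' := (dvd_neg).mpr hz'
    rw [neg_sub] at hz''
    exact hz''
  · rw [if_neg h3, sub_zero]
    have e1 := parity_choose hk2 hk (i+1) (by omega)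
    rw [if_neg (by omega : ¬ 4 ∣ i+1)] at e1
    have : (2:ℕ) ∣ (2*n).choose (i+1) := Nat.modEq_zero_iff_dvd.mp e1
    exact_mod_cast Int.natCast_dvd_natCast.mpr this

/-- If every fusion difference is even then `n+2` is a power of two. -/
lemma bd_two_pow {n : ℕ} (hn : 2 ≤ n) (h2 : 2 ∣ braunDouglas n) : ∃ k, n + 2 = 2^k := by
  have hFF : ∀ i, 1 ≤ i → i ≤ n → (2:ℤ) ∣ FF n i := by
    intro i hi1 hi2
    have := h2.trans (braunDouglas_dvd (by omega) hi1 hi2)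
    rw [← Int.natCast_dvd] at this
    exact_mod_cast this
  -- n is even
  have hneven : 2 ∣ n := by
    have h1 := hFF 1 le_rfl (by omega)
    rw [FF_one n (by omega)] at h1
    have : (2:ℕ) ∣ n * (2*n+1) := by
      rw [← Int.natCast_dvd_natCast]
      push_cast
      exact h1
    rcases (Nat.Prime.dvd_mul Nat.prime_two).mp this with h | h
    · exact h
    · omega
  -- binomials at multiples of 4 are odd
  have c2 : ∀ m, 4*m ≤ n+1 → Nat.choose (2*n) (4*m) ≡ 1 [MOD 2] := by
    intro m
    induction m with
    | zero => intro _; simp; rfl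
    | succ m ih =>
      intro hm
      have ihh := ih (by omega)
      have hF := hFF (4*m+3) (by omega) (by omega)
      rw [FF_choose n (4*m+3) (by omega)] at hF
      have hd : (2:ℤ) ∣ 2*(n:ℤ) * dRep n (4*m+3) := ⟨(n:ℤ) * dRep n (4*m+3), by ring⟩
      have hsub := dvd_sub hd hF
      rw [if_pos (by omega : 3 ≤ 4*m+3)] at hsub
      have hsub' : (2:ℤ) ∣ ((2*n).choose (4*m+3+1) : ℤ) - ((2*n).choose (4*m+3-3) : ℤ) := by
        have h' := hsub
        simp only [sub_sub_cancel] at h'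
        exact h'
      have heq : Nat.choose (2*n) (4*m+3-3) ≡ Nat.choose (2*n) (4*m+3+1) [MOD 2] := by
        rw [Nat.modEq_iff_dvd]
        exact_mod_cast hsub'
      rw [show 4*m+3-3 = 4*m by omega, show 4*m+3+1 = 4*(m+1) by omega] at heq
      exact heq.symm.trans ihh
  -- extract binary digits of 2n
  have c3 : ∀ s, 2 ≤ s → 2^s ≤ n+1 → (2*n) / 2^s % 2 = 1 := by
    intro s hs hsn
    have h4 : 4 * 2^(s-2) = 2^s := by
      rw [show (4:ℕ) = 2^2 by norm_num, ← pow_add]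
      congr 1; omega
    have hC := c2 (2^(s-2)) (by omega)
    rw [h4] at hC
    have := (choose_two_pow_mod_two s (2*n)).symm.trans hC
    simpa [Nat.ModEq] using this
  -- 2n ≡ 2^(s+1) - 4 mod 2^(s+1)
  have c4 : ∀ s, 2 ≤ s → 2^s ≤ n+1 → 2*n % 2^(s+1) = 2^(s+1) - 4 := by
    intro s hs
    induction s, hs using Nat.le_induction with
    | base =>
      intro hsn
      obtain ⟨a, ha⟩ := hneven
      have hd4 : (2*n) / 4 % 2 = 1 := by
        have := c3 2 le_rfl (by norm_num; omega)
        simpa using this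
      have : 2*n / 4 = a := by omega
      omega
    | succ s hs ih =>
      intro hsn
      have hps : 2^s ≤ n+1 := le_trans (Nat.pow_le_pow_right (by norm_num) (by omega)) hsn
      have ihh := ih hps
      have hd := c3 (s+1) (by omega) hsn
      have hmm : 2*n % (2^(s+1) * 2) = 2*n % 2^(s+1) + 2^(s+1) * (2*n / 2^(s+1) % 2) :=
        Nat.mod_mul
      rw [hd, ihh] at hmm
      have hp2 : 2^(s+1+1) = 2^(s+1) * 2 := by rw [pow_succ]
      have hpge : 4 ≤ 2^(s+1) := by
        calc (4:ℕ) = 2^2 := by norm_num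
        _ ≤ 2^(s+1) := Nat.pow_le_pow_right (by norm_num) (by omega)
      rw [hp2]
      omega
  -- conclude
  rcases Nat.lt_or_ge n 4 with h4 | h4
  · have : n = 2 := by omega
    exact ⟨2, by omega⟩
  · set t := Nat.log 2 (n+1) with ht
    have ht1 : 2^t ≤ n+1 := Nat.pow_log_le_self 2 (by omega)
    have ht2 : n+1 < 2^(t+1) := Nat.lt_pow_succ_log_self (by norm_num) (n+1)
    have htge : 2 ≤ t := by
      rw [ht]
      exact (Nat.le_log_iff_pow_le (by norm_num) (by omega)).mpr (by norm_num; omega)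
    have hc := c4 t htge ht1
    have hp2 : 2^(t+1) = 2 * 2^t := by rw [pow_succ']
    have hpge : 4 ≤ 2^t := by
      calc (4:ℕ) = 2^2 := by norm_num
      _ ≤ 2^t := Nat.pow_le_pow_right (by norm_num) htge
    obtain ⟨Q, hQ⟩ : ∃ Q, 2*n = 2^(t+1) * Q + (2^(t+1) - 4) := by
      refine ⟨2*n / 2^(t+1), ?_⟩
      conv_lhs => rw [← Nat.div_add_mod (2*n) (2^(t+1))]
      rw [hc]
    match Q, hQ with
    | 0, hQ => simp at hQ; omega
    | 1, hQ => exact ⟨t+1, by omega⟩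
    | (Q+2), hQ =>
      have hb : 2^(t+1) * 2 ≤ 2^(t+1) * (Q+2) := Nat.mul_le_mul_left _ (by omega)
      omega

lemma six_ne_pow (k : ℕ) : (6:ℕ) ≠ 2^k := by
  intro h
  rcases k with _|_|_|k
  · norm_num at h
  · norm_num at h
  · norm_num at h
  · have h8 : 2^(k+3) = 2^k * 8 := by rw [pow_add]; norm_num
    have := Nat.one_le_two_pow (n := k)
    omega

lemma nmod4 {n k : ℕ} (hn : 2 ≤ n) (h : n + 2 = 2^k) : n % 4 = 2 := by
  rcases k with _|_|_|k
  · norm_num at h; omega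
  · norm_num at h; omega
  · norm_num at h; omega
  · have h8 : 2^(k+3) = 2^k * 8 := by rw [pow_add]; norm_num
    rw [h8] at h
    omega

/-- Theorem 3.1: for `n ≥ 2`, `D(n) = 2` when `n + 2` is a power of `2`, and
`D(n) = 1` otherwise. -/
theorem stmt6 (n : ℕ) (hn : 2 ≤ n) :
    ((∃ k : ℕ, n + 2 = 2 ^ k) → braunDouglas n = 2) ∧
    (¬ (∃ k : ℕ, n + 2 = 2 ^ k) → braunDouglas n = 1) := by
  by_cases hn4 : n = 4
  · subst hn4
    constructor
    · rintro ⟨k, hk⟩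
      exact absurd hk (six_ne_pow k)
    · intro _
      decide
  · have hg12 : braunDouglas n = 1 ∨ (braunDouglas n = 2 ∧ ∃ k, n+2 = 2^k) := by
      by_cases h1 : braunDouglas n = 1
      · left; exact h1
      · right
        have hmf := Nat.minFac_prime h1
        have hmfd := Nat.minFac_dvd (braunDouglas n)
        have h2 : Nat.minFac (braunDouglas n) = 2 := by
          by_contra hne
          exact no_odd_prime hn hn4 hmf hne hmfd
        have h2d : 2 ∣ braunDouglas n := h2 ▸ hmfd
        have hpow := bd_two_pow hn h2d
        refine ⟨?_, hpow⟩
        obtain ⟨m, hm⟩ := h2d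
        by_cases hm1 : m = 1
        · omega
        · exfalso
          have hp := Nat.minFac_prime hm1
          have hmdvd : m.minFac ∣ braunDouglas n := (Nat.minFac_dvd m).trans ⟨2, by omega⟩
          have h2' : m.minFac = 2 := by
            by_contra hne
            exact no_odd_prime hn hn4 hp hne hmdvd
          obtain ⟨u, hu⟩ := h2' ▸ Nat.minFac_dvd m
          have h4 : 4 ∣ braunDouglas n := ⟨u, by omega⟩
          have hd14 : 4 ∣ n * (2*n+1) := by
            have := h4.trans (braunDouglas_dvd (n := n) (i := 1) (by omega) le_rfl (by omega))
            rwa [FF_one_natAbs n (by omega)] at this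
          have hco : Nat.Coprime 4 (2*n+1) := by
            have h2c : Nat.Coprime 2 (2*n+1) :=
              (Nat.Prime.coprime_iff_not_dvd Nat.prime_two).mpr (by omega)
            rw [show (4:ℕ) = 2^2 by norm_num]
            exact h2c.pow_left 2
          have h4n : 4 ∣ n := hco.dvd_of_dvd_mul_right hd14
          obtain ⟨k, hk⟩ := hpow
          have := nmod4 hn hk
          omega
    constructor
    · rintro ⟨k, hk⟩
      rcases hg12 with h1 | ⟨h2, _⟩
      · exfalso
        have := two_dvd_bd hn hk
        omega
      · exact h2
    · intro hnex
      rcases hg12 with h1 | ⟨_, hpow⟩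
      · exact h1
      · exact absurd hpow hnex
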